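/- arXiv:2309.14501 — 2 statements merged into one kernel-verified Lean document; each statement's English description precedes it below -/
import Mathlib

section
/- Fix positive integers i and n and a non-negative integer i-fold iterate index: for all non-negative integers a and a', the largest divisor of z^i(5^a·n) coprime to 5 equals the largest divisor of z^i(5^{a'}·n) coprime to 5. In other words, writing z^i(5^a·n) = c·5^{a_i} with gcd(c,5) = 1, the constant c does not depend on a. -/
/-- The order of appearance of `n` in the Fibonacci sequence: the smallest
positive integer `ℓ` such that `n` divides the `ℓ`-th Fibonacci number. -/
noncomputable def z (n : ℕ) : ℕ := sInf {ℓ : ℕ | 0 < ℓ ∧ n ∣ Nat.fib ℓ}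


open Nat

lemma exists_fib_dvd (n : ℕ) (hn : 0 < n) : ∃ ℓ, 0 < ℓ ∧ n ∣ Nat.fib ℓ := by
  haveI : NeZero n := ⟨hn.ne'⟩
  let s : (ZMod n × ZMod n) ≃ (ZMod n × ZMod n) :=
    { toFun := fun p => (p.2, p.1 + p.2)
      invFun := fun p => (p.2 - p.1, p.1)
      left_inv := fun p => by simp
      right_inv := fun p => by simp }
  have hiter : ∀ ℓ : ℕ, s^[ℓ] (0, 1) = ((Nat.fib ℓ : ZMod n), (Nat.fib (ℓ+1) : ZMod n)) := by
    intro ℓ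
    induction ℓ with
    | zero => simp
    | succ m ih =>
      rw [Function.iterate_succ_apply', ih]
      show ((Nat.fib (m+1) : ZMod n), (Nat.fib m : ZMod n) + (Nat.fib (m+1) : ZMod n)) = _
      rw [Nat.fib_add_two]
      push_cast
      ring_nf
  obtain ⟨i, j, hne, heq⟩ := Finite.exists_ne_map_eq_of_infinite
    (fun ℓ : ℕ => s^[ℓ] ((0 : ZMod n), (1 : ZMod n)))
  wlog hij : i < j generalizing i j
  · exact this j i hne.symm heq.symm (by omega)
  have ht : s^[j - i] (0, 1) = (0, 1) := by
    have : s^[i] (s^[j - i] (0, 1)) = s^[i] (0, 1) := by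
      rw [← Function.iterate_add_apply]
      have : i + (j - i) = j := by omega
      rw [this, heq]
    exact (s.injective.iterate i) this
  refine ⟨j - i, by omega, ?_⟩
  have := hiter (j - i)
  rw [ht] at this
  have h0 : ((Nat.fib (j - i) : ZMod n)) = 0 := by
    have := congrArg Prod.fst this
    simpa using this.symm
  exact (ZMod.natCast_eq_zero_iff _ _).mp h0

lemma z_mem (n : ℕ) (hn : 0 < n) : 0 < z n ∧ n ∣ Nat.fib (z n) :=
  Nat.sInf_mem (exists_fib_dvd n hn)

lemma z_pos (n : ℕ) (hn : 0 < n) : 0 < z n := (z_mem n hn).1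

lemma z_dvd_fib (n : ℕ) (hn : 0 < n) : n ∣ Nat.fib (z n) := (z_mem n hn).2

lemma z_dvd_iff (n : ℕ) (hn : 0 < n) (ℓ : ℕ) : n ∣ Nat.fib ℓ ↔ z n ∣ ℓ := by
  constructor
  · intro h
    rcases Nat.eq_zero_or_pos ℓ with rfl | hl
    · exact dvd_zero _
    have hg : n ∣ Nat.fib (Nat.gcd ℓ (z n)) := by
      rw [Nat.fib_gcd]
      exact Nat.dvd_gcd h (z_dvd_fib n hn)
    have hgpos : 0 < Nat.gcd ℓ (z n) := Nat.gcd_pos_of_pos_left _ hl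
    have hle : z n ≤ Nat.gcd ℓ (z n) := Nat.sInf_le ⟨hgpos, hg⟩
    have hdvd : Nat.gcd ℓ (z n) ∣ z n := Nat.gcd_dvd_right _ _
    have : Nat.gcd ℓ (z n) = z n :=
      le_antisymm (Nat.le_of_dvd (z_pos n hn) hdvd) hle
    rw [← this]
    exact Nat.gcd_dvd_left _ _
  · intro h
    exact dvd_trans (z_dvd_fib n hn) (Nat.fib_dvd _ _ h)

lemma z_lcm (m n : ℕ) (hm : 0 < m) (hn : 0 < n) :
    z (Nat.lcm m n) = Nat.lcm (z m) (z n) := by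
  have hl : 0 < Nat.lcm m n := Nat.lcm_pos hm hn
  apply Nat.dvd_antisymm
  · rw [← z_dvd_iff _ hl]
    exact Nat.lcm_dvd ((z_dvd_iff m hm _).mpr (Nat.dvd_lcm_left _ _))
      ((z_dvd_iff n hn _).mpr (Nat.dvd_lcm_right _ _))
  · apply Nat.lcm_dvd
    · rw [← z_dvd_iff m hm]
      exact dvd_trans (Nat.dvd_lcm_left m n) (z_dvd_fib _ hl)
    · rw [← z_dvd_iff n hn]
      exact dvd_trans (Nat.dvd_lcm_right m n) (z_dvd_fib _ hl)

lemma cassini (k : ℕ) :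
    ((Nat.fib (k+1) : ℤ))^2 - Nat.fib (k+1) * Nat.fib k - (Nat.fib k : ℤ)^2 = (-1)^k := by
  induction k with
  | zero => simp
  | succ m ih =>
    rw [Nat.fib_add_two]
    push_cast
    rw [pow_succ]
    linear_combination (-1 : ℤ) * ih

lemma fib_five_mul (c : ℕ) :
    Nat.fib (5 * (c+1)) = Nat.fib (c+1) *
      (5 * (Nat.fib (c+1)^4 + 3*Nat.fib (c+1)^3*Nat.fib c + 4*Nat.fib (c+1)^2*Nat.fib c^2
        + 2*Nat.fib (c+1)*Nat.fib c^3 + Nat.fib c^4)) := by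
  have hG : Nat.fib (c+2) = Nat.fib c + Nat.fib (c+1) := Nat.fib_add_two
  have A2 : Nat.fib (2*c+2) = Nat.fib (c+1) * Nat.fib c + Nat.fib (c+2) * Nat.fib (c+1) := by
    rw [show 2*c+2 = (c+1) + c + 1 by ring, Nat.fib_add]
  have B2 : Nat.fib (2*c+3) = Nat.fib (c+1) * Nat.fib (c+1) + Nat.fib (c+2) * Nat.fib (c+2) := by
    rw [show 2*c+3 = (c+1) + (c+1) + 1 by ring, Nat.fib_add]
  have A3 : Nat.fib (3*c+3) = Nat.fib (2*c+2) * Nat.fib c + Nat.fib (2*c+3) * Nat.fib (c+1) := by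
    rw [show 3*c+3 = (2*c+2) + c + 1 by ring, Nat.fib_add]
  have B3 : Nat.fib (3*c+4) = Nat.fib (2*c+2) * Nat.fib (c+1) + Nat.fib (2*c+3) * Nat.fib (c+2) := by
    rw [show 3*c+4 = (2*c+2) + (c+1) + 1 by ring, Nat.fib_add]
  have A4 : Nat.fib (4*c+4) = Nat.fib (3*c+3) * Nat.fib c + Nat.fib (3*c+4) * Nat.fib (c+1) := by
    rw [show 4*c+4 = (3*c+3) + c + 1 by ring, Nat.fib_add]
  have B4 : Nat.fib (4*c+5) = Nat.fib (3*c+3) * Nat.fib (c+1) + Nat.fib (3*c+4) * Nat.fib (c+2) := by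
    rw [show 4*c+5 = (3*c+3) + (c+1) + 1 by ring, Nat.fib_add]
  have A5 : Nat.fib (5*c+5) = Nat.fib (4*c+4) * Nat.fib c + Nat.fib (4*c+5) * Nat.fib (c+1) := by
    rw [show 5*c+5 = (4*c+4) + c + 1 by ring, Nat.fib_add]
  rw [show 5*(c+1) = 5*c+5 by ring, A5, A4, B4, A3, B3, A2, B2, hG]
  ring

lemma nu_fib_five_mul (k : ℕ) (hk : 0 < k) :
    (Nat.fib (5*k)).factorization 5 = (Nat.fib k).factorization 5 + 1 := by
  obtain ⟨c, rfl⟩ : ∃ c, k = c + 1 := ⟨k - 1, by omega⟩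
  set F := Nat.fib (c+1) with hF
  set D := Nat.fib c with hD
  set K := F^4 + 3*F^3*D + 4*F^2*D^2 + 2*F*D^3 + D^4 with hK
  have hfib : Nat.fib (5*(c+1)) = F * (5 * K) := fib_five_mul c
  have h5K : ¬ (5 ∣ K) := by
    intro hdvd
    have hcas := cassini c
    have hZ : (K : ℤ) = 5 * ((F:ℤ)^4 + ((D:ℤ)^2 + D*F - F^2)*F^2)
        + (((F:ℤ)^2 - F*D - (D:ℤ)^2)^2 - ((-1:ℤ))^(2*c)) + 1 := by
      rw [hK]; push_cast
      have : ((-1:ℤ))^(2*c) = 1 := by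
        rw [pow_mul]; norm_num
      rw [this]; ring
    have hsq : ((F:ℤ)^2 - F*D - (D:ℤ)^2)^2 = ((-1:ℤ))^(2*c) := by
      have := cassini c
      rw [pow_mul]
      calc ((F:ℤ)^2 - F*D - (D:ℤ)^2)^2 = (((F:ℤ)^2 - F*D - (D:ℤ)^2))^2 := rfl
        _ = ((-1:ℤ)^c)^2 := by rw [this]
        _ = ((-1:ℤ)^2)^c := by rw [← pow_mul, ← pow_mul, Nat.mul_comm]
    rw [hsq] at hZ
    have h51 : (K:ℤ) % 5 = 1 := by
      rw [hZ]; ring_nf; omega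
    obtain ⟨t, ht⟩ := hdvd
    have ht' : (K:ℤ) = 5 * (t:ℤ) := by exact_mod_cast ht
    omega
  have hFpos : 0 < F := Nat.fib_pos.mpr (Nat.succ_pos c)
  have hKpos : 0 < K := by
    rcases Nat.eq_zero_or_pos K with h | h
    · exact absurd (h ▸ dvd_zero 5) h5K
    · exact h
  rw [hfib, Nat.factorization_mul hFpos.ne' (by positivity),
    Nat.factorization_mul (by norm_num) hKpos.ne']
  simp [Nat.Prime.factorization_self (by norm_num : Nat.Prime 5),
    Nat.factorization_eq_zero_of_not_dvd h5K]

lemma z_five : z 5 = 5 := by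
  have hmem : 0 < z 5 ∧ 5 ∣ Nat.fib (z 5) := z_mem 5 (by norm_num)
  have hle : z 5 ≤ 5 := Nat.sInf_le ⟨by norm_num, by decide⟩
  obtain ⟨hpos, hdvd⟩ := hmem
  interval_cases h : z 5 <;> revert hdvd <;> decide

lemma nu_fib (ℓ : ℕ) (hl : 0 < ℓ) :
    (Nat.fib ℓ).factorization 5 = ℓ.factorization 5 := by
  induction ℓ using Nat.strong_induction_on with
  | _ ℓ ih =>
    by_cases h5 : 5 ∣ ℓ
    · obtain ⟨k, rfl⟩ := h5
      have hk : 0 < k := by omega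
      rw [nu_fib_five_mul k hk, ih k (by omega) hk,
        Nat.factorization_mul (by norm_num) hk.ne']
      simp only [Nat.Prime.factorization_self (by norm_num : Nat.Prime 5),
        Finsupp.coe_add, Pi.add_apply]
      omega
    · have hnd : ¬ (5 ∣ Nat.fib ℓ) := by
        rw [z_dvd_iff 5 (by norm_num) ℓ, z_five]
        exact h5
      rw [Nat.factorization_eq_zero_of_not_dvd hnd,
        Nat.factorization_eq_zero_of_not_dvd h5]

lemma z_pow_five (e : ℕ) : z (5^e) = 5^e := by
  have hpe : 0 < (5:ℕ)^e := by positivity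
  have hiff : ∀ ℓ : ℕ, 0 < ℓ → ((5:ℕ)^e ∣ Nat.fib ℓ ↔ 5^e ∣ ℓ) := by
    intro ℓ hl
    rw [Nat.Prime.pow_dvd_iff_le_factorization (by norm_num) (Nat.fib_pos.mpr hl).ne',
      Nat.Prime.pow_dvd_iff_le_factorization (by norm_num) hl.ne', nu_fib ℓ hl]
  have hmem : (5:ℕ)^e ∈ {ℓ : ℕ | 0 < ℓ ∧ (5:ℕ)^e ∣ Nat.fib ℓ} :=
    ⟨hpe, (hiff _ hpe).mpr dvd_rfl⟩
  have hz := z_mem (5^e) hpe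
  exact le_antisymm (Nat.sInf_le hmem) (Nat.le_of_dvd hz.1 ((hiff _ hz.1).mp hz.2))

lemma ordCompl_five_mul_pow (i c : ℕ) (hc : 0 < c) (h5 : ¬ (5 ∣ c)) :
    ordCompl[5] (5^i * c) = c := by
  have hfact : (5^i * c).factorization 5 = i := by
    rw [Nat.factorization_mul (by positivity : (5:ℕ)^i ≠ 0) hc.ne',
      Nat.Prime.factorization_pow (by norm_num : Nat.Prime 5)]
    simp [Nat.factorization_eq_zero_of_not_dvd h5]
  rw [hfact, Nat.mul_div_cancel_left c (by positivity : 0 < (5:ℕ)^i)]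

lemma ordCompl_lcm_pow_five (E w : ℕ) (hw : 0 < w) :
    ordCompl[5] (Nat.lcm (5^E) w) = ordCompl[5] w := by
  set ν := w.factorization 5 with hν
  set cw := ordCompl[5] w with hcw
  have hwd : 5^ν * cw = w := Nat.ordProj_mul_ordCompl_eq_self w 5
  have hcwpos : 0 < cw := Nat.ordCompl_pos 5 hw.ne'
  have h5cw : ¬ (5 ∣ cw) := Nat.not_dvd_ordCompl (by norm_num) hw.ne'
  by_cases hEν : E ≤ ν
  · have hdvd : (5:ℕ)^E ∣ w := dvd_trans (pow_dvd_pow 5 hEν) (Dvd.intro cw hwd)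
    have : Nat.lcm (5^E) w = w :=
      Nat.dvd_antisymm (Nat.lcm_dvd hdvd dvd_rfl) (Nat.dvd_lcm_right _ _)
    rw [this]
  · have hcop : Nat.Coprime (5^E) cw :=
      Nat.Coprime.pow_left _ ((Nat.Prime.coprime_iff_not_dvd (by norm_num)).mpr h5cw)
    have hlcm : Nat.lcm (5^E) w = 5^E * cw := by
      apply Nat.dvd_antisymm
      · exact Nat.lcm_dvd (Dvd.intro cw rfl)
          (hwd ▸ Nat.mul_dvd_mul_right (pow_dvd_pow 5 (by omega)) cw)
      · exact Nat.Coprime.mul_dvd_of_dvd_of_dvd hcop (Nat.dvd_lcm_left _ _)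
          (dvd_trans (Dvd.intro_left _ hwd) (Nat.dvd_lcm_right _ _))
    rw [hlcm, ordCompl_five_mul_pow E cw hcwpos h5cw]

lemma key (n : ℕ) (hn : 0 < n) (a : ℕ) :
    ordCompl[5] (z (5^a * n)) = ordCompl[5] (z (ordCompl[5] n)) := by
  set b := n.factorization 5 with hb
  set cn := ordCompl[5] n with hcn
  have hnd : 5^b * cn = n := Nat.ordProj_mul_ordCompl_eq_self n 5
  have hcnpos : 0 < cn := Nat.ordCompl_pos 5 hn.ne'
  have h5cn : ¬ (5 ∣ cn) := Nat.not_dvd_ordCompl (by norm_num) hn.ne'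
  have hcop : Nat.Coprime (5^(a+b)) cn :=
    Nat.Coprime.pow_left _ ((Nat.Prime.coprime_iff_not_dvd (by norm_num)).mpr h5cn)
  have h1 : 5^a * n = Nat.lcm (5^(a+b)) cn := by
    rw [hcop.lcm_eq_mul, ← hnd, pow_add]; ring
  rw [h1, z_lcm _ _ (by positivity) hcnpos, z_pow_five,
    ordCompl_lcm_pow_five _ _ (z_pos cn hcnpos)]

theorem coprime_part_const (i n : ℕ) (hi : 0 < i) (hn : 0 < n) (a a' : ℕ) :
    (z^[i] (5 ^ a * n)) / 5 ^ ((z^[i] (5 ^ a * n)).factorization 5) =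
      (z^[i] (5 ^ a' * n)) / 5 ^ ((z^[i] (5 ^ a' * n)).factorization 5) := by
  induction i, hi using Nat.le_induction generalizing n a a' with
  | base =>
    simp only [Function.iterate_one]
    rw [key n hn a, key n hn a']
  | succ i hi ih =>
    rw [Function.iterate_succ_apply, Function.iterate_succ_apply]
    set x := z (5^a * n) with hx
    set x' := z (5^a' * n) with hx'
    have hxpos : 0 < x := z_pos _ (by positivity)
    have hx'pos : 0 < x' := z_pos _ (by positivity)
    have hcc : ordCompl[5] x = ordCompl[5] x' := by
      rw [hx, hx', key n hn a, key n hn a']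
    set c := ordCompl[5] x with hc
    have hcpos : 0 < c := Nat.ordCompl_pos 5 hxpos.ne'
    have hdx : x = 5^(x.factorization 5) * c := (Nat.ordProj_mul_ordCompl_eq_self x 5).symm
    have hdx' : x' = 5^(x'.factorization 5) * c := by
      rw [hcc]; exact (Nat.ordProj_mul_ordCompl_eq_self x' 5).symm
    rw [hdx, hdx']
    exact ih c hcpos _ _
end

section
/- For every integer a ≥ 4, z^{⌈a/2⌉ - 1}(2^a) = 12, while z^{⌈a/2⌉ - 2}(2^a) ≠ 12; that is, 2^a requires exactly ⌈a/2⌉ - 1 iterations of z to reach the fixed point 12. -/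
lemma two_dvd_fib_iff (n : ℕ) : 2 ∣ Nat.fib n ↔ 3 ∣ n := by
  constructor
  · intro h
    have h2 : (2 : ℕ) ∣ Nat.gcd (Nat.fib n) (Nat.fib 3) := Nat.dvd_gcd h (by norm_num)
    rw [← Nat.fib_gcd] at h2
    have h3 : Nat.gcd n 3 ∣ 3 := Nat.gcd_dvd_right n 3
    have h4 : Nat.gcd n 3 = 1 ∨ Nat.gcd n 3 = 3 := (Nat.Prime.eq_one_or_self_of_dvd (by norm_num) _ h3)
    rcases h4 with h4 | h4
    · simp [h4] at h2
    · exact h4 ▸ Nat.gcd_dvd_left n 3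
  · intro h
    have : Nat.fib 3 ∣ Nat.fib n := Nat.fib_dvd 3 n h
    simpa [show Nat.fib 3 = 2 by rfl] using this

lemma odd_fib (n : ℕ) (h : ¬ 3 ∣ n) : Odd (Nat.fib n) := by
  rw [Nat.odd_iff, Nat.two_dvd_ne_zero.symm]
  exact fun hc => h ((two_dvd_fib_iff n).mp hc)

lemma fib_val2 (k : ℕ) (hk : 1 ≤ k) :
    ∃ u, Odd u ∧ Nat.fib (3 * 2 ^ k) = 2 ^ (k + 2) * u := by
  induction k with
  | zero => omega
  | succ k ih =>
    rcases Nat.eq_or_lt_of_le hk with hk1 | hk1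
    · exact ⟨1, odd_one, by norm_num [← hk1]⟩
    · have hk' : 1 ≤ k := by omega
      obtain ⟨u, hu, hfib⟩ := ih hk'
      set m := 3 * 2 ^ k with hm
      obtain ⟨v, hv⟩ : Odd (Nat.fib (m + 1)) := by
        apply odd_fib
        omega
      have hle : Nat.fib m ≤ Nat.fib (m + 1) := Nat.fib_mono (Nat.le_succ m)
      have hle' : 2 ^ (k + 1) * u ≤ v := by
        have h2 : 2 * (2 ^ (k + 1) * u) = 2 ^ (k + 2) * u := by ring
        omega
      have h2m : 3 * 2 ^ (k + 1) = 2 * m := by ring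
      rw [h2m, Nat.fib_two_mul, hfib, hv]
      refine ⟨u * (2 * v + 1 - 2 ^ (k + 1) * u), ?_, ?_⟩
      · refine hu.mul ?_
        rw [Nat.odd_iff]
        have : 2 ^ (k + 1) * u % 2 = 0 := by
          have : 2 ∣ 2 ^ (k + 1) * u := Dvd.dvd.mul_right (dvd_pow_self 2 (by omega)) u
          omega
        omega
      · have key : 2 * (2 * v + 1) - 2 ^ (k + 2) * u
            = 2 * (2 * v + 1 - 2 ^ (k + 1) * u) := by
          have h2 : 2 * (2 ^ (k + 1) * u) = 2 ^ (k + 2) * u := by ring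
          omega
        rw [key]
        ring

lemma z_spec {n m : ℕ} (hm : 0 < m) (hdvd : n ∣ Nat.fib m) :
    (0 < z n ∧ n ∣ Nat.fib (z n)) ∧ z n ≤ m := by
  have hne : {ℓ : ℕ | 0 < ℓ ∧ n ∣ Nat.fib ℓ}.Nonempty := ⟨m, hm, hdvd⟩
  exact ⟨Nat.sInf_mem hne, Nat.sInf_le ⟨hm, hdvd⟩⟩

lemma z_dvd {n ℓ : ℕ} (hl : 0 < ℓ) (hdvd : n ∣ Nat.fib ℓ) : z n ∣ ℓ := by
  obtain ⟨⟨hz, hzd⟩, _⟩ := z_spec hl hdvd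
  have hg : 0 < Nat.gcd (z n) ℓ ∧ n ∣ Nat.fib (Nat.gcd (z n) ℓ) := by
    constructor
    · exact Nat.gcd_pos_of_pos_left ℓ hz
    · rw [Nat.fib_gcd]
      exact Nat.dvd_gcd hzd hdvd
  have h1 : z n ≤ Nat.gcd (z n) ℓ := Nat.sInf_le hg
  have h2 : Nat.gcd (z n) ℓ ≤ z n := Nat.le_of_dvd hz (Nat.gcd_dvd_left _ _)
  have : Nat.gcd (z n) ℓ = z n := le_antisymm h2 h1
  exact this ▸ Nat.gcd_dvd_right (z n) ℓ

lemma exact_val {j a : ℕ} (ha : 2 ≤ a) (h : 2 ^ a ∣ Nat.fib (3 * 2 ^ j)) :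
    a ≤ j + 2 := by
  rcases Nat.eq_zero_or_pos j with rfl | hj
  · norm_num at h
    have := Nat.le_of_dvd (by norm_num) h
    have := Nat.pow_le_pow_right (show 1 ≤ 2 by norm_num) ha
    omega
  · obtain ⟨u, hu, hfib⟩ := fib_val2 j hj
    rw [hfib] at h
    have hcop : Nat.Coprime (2 ^ a) u := by
      apply Nat.Coprime.pow_left
      rw [Nat.coprime_comm]
      exact Nat.coprime_two_right.mpr hu
    have h2 : 2 ^ a ∣ 2 ^ (j + 2) := (Nat.Coprime.dvd_of_dvd_mul_right hcop) h
    exact (Nat.pow_dvd_pow_iff_le_right (by norm_num)).mp h2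

lemma min_aux {a k d : ℕ} (ha : 2 ≤ a) (hd : 0 < d) (hdvd : d ∣ 3 * 2 ^ k)
    (hfib : 2 ^ a ∣ Nat.fib d) : 3 * 2 ^ (a - 2) ∣ d := by
  have h2 : 2 ∣ Nat.fib d := dvd_trans (dvd_pow_self 2 (by omega)) hfib
  have h3 : 3 ∣ d := (two_dvd_fib_iff d).mp h2
  obtain ⟨e, rfl⟩ := h3
  have he : e ∣ 2 ^ k := (mul_dvd_mul_iff_left (show (3:ℕ) ≠ 0 by norm_num)).mp hdvd
  obtain ⟨j, hj, rfl⟩ := (Nat.dvd_prime_pow Nat.prime_two).mp he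
  have := exact_val ha hfib
  exact Nat.mul_dvd_mul_left 3 (Nat.pow_dvd_pow 2 (by omega))

lemma z_two_pow {a : ℕ} (ha : 3 ≤ a) : z (2 ^ a) = 3 * 2 ^ (a - 2) := by
  obtain ⟨u, hu, hfib⟩ := fib_val2 (a - 2) (by omega)
  have ha2 : a - 2 + 2 = a := by omega
  rw [ha2] at hfib
  have hmem : 2 ^ a ∣ Nat.fib (3 * 2 ^ (a - 2)) := hfib ▸ Dvd.intro u rfl
  have hpos : 0 < 3 * 2 ^ (a - 2) := by positivity
  obtain ⟨⟨hz, hzd⟩, _⟩ := z_spec hpos hmem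
  exact Nat.dvd_antisymm (z_dvd hpos hmem)
    (min_aux (by omega) hz (z_dvd hpos hmem) hzd)

lemma z_three_two_pow {k : ℕ} (hk : 4 ≤ k) : z (3 * 2 ^ k) = 3 * 2 ^ (k - 2) := by
  obtain ⟨u, hu, hfib⟩ := fib_val2 (k - 2) (by omega)
  have hk2 : k - 2 + 2 = k := by omega
  rw [hk2] at hfib
  have h2 : 2 ^ k ∣ Nat.fib (3 * 2 ^ (k - 2)) := hfib ▸ Dvd.intro u rfl
  have h3 : 3 ∣ Nat.fib (3 * 2 ^ (k - 2)) := by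
    have h4 : 4 ∣ 3 * 2 ^ (k - 2) := by
      have : (4:ℕ) ∣ 2 ^ (k - 2) := by
        have : (2:ℕ)^2 ∣ 2 ^ (k - 2) := Nat.pow_dvd_pow 2 (by omega)
        simpa using this
      exact this.mul_left 3
    have := Nat.fib_dvd 4 (3 * 2 ^ (k - 2)) h4
    simpa [show Nat.fib 4 = 3 by rfl] using this
  have hmem : 3 * 2 ^ k ∣ Nat.fib (3 * 2 ^ (k - 2)) := by
    refine Nat.Coprime.mul_dvd_of_dvd_of_dvd ?_ h3 h2
    exact Nat.Coprime.pow_right k (by norm_num)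
  have hpos : 0 < 3 * 2 ^ (k - 2) := by positivity
  obtain ⟨⟨hz, hzd⟩, _⟩ := z_spec hpos hmem
  have hzd2 : 2 ^ k ∣ Nat.fib (z (3 * 2 ^ k)) :=
    dvd_trans (Dvd.intro_left 3 rfl) hzd
  exact Nat.dvd_antisymm (z_dvd hpos hmem)
    (min_aux (by omega) hz (z_dvd hpos hmem) hzd2)

lemma z_24 : z 24 = 12 := by
  have hmem : 24 ∣ Nat.fib 12 := by norm_num
  obtain ⟨⟨hz, hzd⟩, hle⟩ := z_spec (show 0 < 12 by norm_num) hmem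
  have hd : z 24 ∣ 12 := z_dvd (by norm_num) hmem
  interval_cases h : z 24 <;> revert hzd <;> simp_all <;> decide

lemma z_48 : z 48 = 12 := by
  have hmem : 48 ∣ Nat.fib 12 := by norm_num
  obtain ⟨⟨hz, hzd⟩, hle⟩ := z_spec (show 0 < 12 by norm_num) hmem
  have hd : z 48 ∣ 12 := z_dvd (by norm_num) hmem
  interval_cases h : z 48 <;> revert hzd <;> simp_all <;> decide

lemma L1 : ∀ k, 3 ≤ k → z^[(k - 1) / 2] (3 * 2 ^ k) = 12 := by
  intro k
  induction k using Nat.strong_induction_on with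
  | _ k ih =>
    intro hk
    rcases (show k = 3 ∨ k = 4 ∨ 5 ≤ k by omega) with rfl | rfl | hk5
    · simpa using z_24
    · simpa using z_48
    · have h1 : (k - 1) / 2 = (k - 2 - 1) / 2 + 1 := by omega
      rw [h1, Function.iterate_succ_apply, z_three_two_pow (by omega)]
      exact ih (k - 2) (by omega) (by omega)

lemma L2 : ∀ k, 3 ≤ k →
    z^[(k - 3) / 2] (3 * 2 ^ k) = 24 ∨ z^[(k - 3) / 2] (3 * 2 ^ k) = 48 := by
  intro k
  induction k using Nat.strong_induction_on with
  | _ k ih =>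
    intro hk
    rcases (show k = 3 ∨ k = 4 ∨ 5 ≤ k by omega) with rfl | rfl | hk5
    · left; norm_num
    · right; norm_num
    · have h1 : (k - 3) / 2 = (k - 2 - 3) / 2 + 1 := by omega
      rw [h1, Function.iterate_succ_apply, z_three_two_pow (by omega)]
      exact ih (k - 2) (by omega) (by omega)

theorem two_pow_exact_iterations (a : ℕ) (ha : 4 ≤ a) :
    z^[(a + 1) / 2 - 1] (2 ^ a) = 12 ∧ z^[(a + 1) / 2 - 2] (2 ^ a) ≠ 12 := by
  rcases (show a = 4 ∨ 5 ≤ a by omega) with rfl | ha5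
  · constructor
    · have : z (2 ^ 4) = 12 := by simpa using z_two_pow (a := 4) (by norm_num)
      simpa using this
    · norm_num
  · constructor
    · have h1 : (a + 1) / 2 - 1 = (a - 2 - 1) / 2 + 1 := by omega
      rw [h1, Function.iterate_succ_apply, z_two_pow (by omega)]
      exact L1 (a - 2) (by omega)
    · have h1 : (a + 1) / 2 - 2 = (a - 2 - 3) / 2 + 1 := by omega
      rw [h1, Function.iterate_succ_apply, z_two_pow (by omega)]
      rcases L2 (a - 2) (by omega) with h | h <;> rw [h] <;> norm_num
end
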